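/- In B_3, for p, q ≥ 1 the word a2^{-p} α σ2^{-p_1} σ1^{q_1} ⋯ σ2^{-p_k} σ1^{q_k} α⁻¹ a1^{q} equals a2^{-p+1} σ1 σ2^{-p_1} σ1^{q_1} ⋯ σ2^{-p_k} σ1^{q_k - 1} σ2⁻¹ a1^{q}, where α = σ2 σ1. -/
import Mathlib


/-- The braid relation for the braid group on 3 strands. -/
def braidRels : Set (FreeGroup (Fin 2)) :=
  {FreeGroup.of 0 * FreeGroup.of 1 * FreeGroup.of 0 *
    (FreeGroup.of 1 * FreeGroup.of 0 * FreeGroup.of 1)⁻¹}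

/-- The braid group `B₃ = ⟨σ1, σ2 | σ1 σ2 σ1 = σ2 σ1 σ2⟩`. -/
abbrev B3 := PresentedGroup braidRels

def σ1 : B3 := PresentedGroup.of 0
def σ2 : B3 := PresentedGroup.of 1
def a1 : B3 := σ1
def a2 : B3 := σ2
def a3 : B3 := σ2 * σ1 * σ2⁻¹
def α : B3 := a2 * a1

/-- In `B₃`, for `p, q ≥ 1` and positive integers `pᵢ, qᵢ`,
`a2^{-p} α (σ2^{-p₁} σ1^{q₁} ⋯ σ2^{-pₖ} σ1^{qₖ}) α⁻¹ a1^{q}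
  = a2^{-p+1} σ1 (σ2^{-p₁} σ1^{q₁} ⋯ σ2^{-pₖ} σ1^{qₖ - 1}) σ2⁻¹ a1^{q}`. -/
theorem conjugate_alternating_word (p q k : ℕ) (hp : 1 ≤ p) (hq : 1 ≤ q) (hk : 1 ≤ k)
    (ps qs : Fin k → ℕ) (hps : ∀ i, 1 ≤ ps i) (hqs : ∀ i, 1 ≤ qs i) :
    a2 ^ (-(p : ℤ)) * α *
        (List.ofFn fun i : Fin k => σ2 ^ (-(ps i : ℤ)) * σ1 ^ (qs i : ℤ)).prod *
        α⁻¹ * a1 ^ (q : ℤ)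
      = a2 ^ (-(p : ℤ) + 1) * σ1 *
          (List.ofFn fun i : Fin k =>
            σ2 ^ (-(ps i : ℤ)) *
              σ1 ^ (if i.val = k - 1 then (qs i : ℤ) - 1 else (qs i : ℤ))).prod *
          σ2⁻¹ * a1 ^ (q : ℤ) := by
  obtain ⟨m, rfl⟩ : ∃ m, k = m + 1 := ⟨k - 1, by omega⟩
  rw [List.ofFn_succ', List.ofFn_succ']
  have h1 : (List.ofFn fun i : Fin m =>
      σ2 ^ (-(ps i.castSucc : ℤ)) *
        σ1 ^ (if (i.castSucc : Fin (m+1)).val = m + 1 - 1 then (qs i.castSucc : ℤ) - 1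
          else (qs i.castSucc : ℤ)))
      = List.ofFn fun i : Fin m => σ2 ^ (-(ps i.castSucc : ℤ)) * σ1 ^ (qs i.castSucc : ℤ) := by
    congr 1
    funext i
    have : (Fin.castSucc i : Fin (m+1)).val ≠ m + 1 - 1 := by
      have := i.isLt; simp [Fin.castSucc]; omega
    simp only [Fin.coe_castSucc] at this ⊢
    rw [if_neg (by omega)]
  rw [h1]
  have h2 : ((Fin.last m : Fin (m+1)).val = m + 1 - 1) = True := by simp
  simp only [h2, if_true, List.concat_eq_append, List.prod_append, List.prod_cons,
    List.prod_nil]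
  have hzq : σ1 ^ ((qs (Fin.last m) : ℤ)) = σ1 ^ ((qs (Fin.last m) : ℤ) - 1) * σ1 := by
    rw [← zpow_add_one]
    ring_nf
  rw [hzq]
  unfold α a1 a2
  group
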